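/- Let P, Q be orthogonal projections on a Hilbert space with Q - P in the Schatten class J_3, and let f_t(λ) = (1+t)λ^3/(1+tλ^2) for t ≥ 0. Then f_t(Q-P) is trace class and tr f_t(Q-P) = tr (Q-P)^3 for all 0 ≤ t < ∞. -/

import Mathlib

open scoped InnerProductSpace
open ContinuousLinearMap in
/-- Sum over a Hilbert basis of `⟨e i, |T|^p (e i)⟩`, where `|T|^p = (T†T)^{p/2}`
is defined by the continuous functional calculus. -/
noncomputable def schattenSum {H : Type*} [NormedAddCommGroup H] [InnerProductSpace ℂ H]
    [CompleteSpace H] {ι : Type*} (b : HilbertBasis ι ℂ H) (p : ℝ) (T : H →L[ℂ] H) : ℝ :=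
  ∑' i, (⟪b i, (cfc (fun x : ℝ => x ^ (p / 2)) (adjoint T * T)) (b i)⟫_ℂ).re

open ContinuousLinearMap in
/-- `T` belongs to the Schatten ideal `J_p` (w.r.t. the basis `b`). -/
def MemSchatten {H : Type*} [NormedAddCommGroup H] [InnerProductSpace ℂ H]
    [CompleteSpace H] {ι : Type*} (b : HilbertBasis ι ℂ H) (p : ℝ) (T : H →L[ℂ] H) : Prop :=
  Summable fun i => (⟪b i, (cfc (fun x : ℝ => x ^ (p / 2)) (adjoint T * T)) (b i)⟫_ℂ).re

/-- The Schatten `p`-norm. -/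
noncomputable def schattenNorm {H : Type*} [NormedAddCommGroup H] [InnerProductSpace ℂ H]
    [CompleteSpace H] {ι : Type*} (b : HilbertBasis ι ℂ H) (p : ℝ) (T : H →L[ℂ] H) : ℝ :=
  (schattenSum b p T) ^ (1 / p)

/-- The trace, evaluated in the Hilbert basis `b`. -/
noncomputable def traceB {H : Type*} [NormedAddCommGroup H] [InnerProductSpace ℂ H]
    [CompleteSpace H] {ι : Type*} (b : HilbertBasis ι ℂ H) (T : H →L[ℂ] H) : ℂ :=
  ∑' i, ⟪b i, T (b i)⟫_ℂ
set_option linter.unusedSectionVars false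
set_option linter.unusedVariables false
set_option maxHeartbeats 1000000
set_option synthInstance.maxHeartbeats 400000

open ContinuousLinearMap

section Stmt7Aux

variable {H : Type*} [NormedAddCommGroup H] [InnerProductSpace ℂ H] [CompleteSpace H]
  {ι : Type*} (b : HilbertBasis ι ℂ H)


variable {H : Type*} [NormedAddCommGroup H] [InnerProductSpace ℂ H] [CompleteSpace H]
  {ι : Type*} (b : HilbertBasis ι ℂ H)



variable {H : Type*} [NormedAddCommGroup H] [InnerProductSpace ℂ H] [CompleteSpace H]
  {ι : Type*} (b : HilbertBasis ι ℂ H)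

lemma diag_real {S : H →L[ℂ] H} (hS : IsSelfAdjoint S) (x : H) :
    ⟪x, S x⟫_ℂ = ((⟪x, S x⟫_ℂ).re : ℂ) := by
  have h := (isSelfAdjoint_iff_isSymmetric.mp hS) x x
  have hc : (starRingEnd ℂ) ⟪x, S x⟫_ℂ = ⟪x, S x⟫_ℂ := by
    rw [inner_conj_symm]
    exact h
  exact (Complex.conj_eq_iff_re.mp hc).symm

lemma diag_nonneg {S : H →L[ℂ] H} (hS : 0 ≤ S) (x : H) :
    0 ≤ (⟪x, S x⟫_ℂ).re := by
  have := ((nonneg_iff_isPositive S).mp hS).inner_nonneg_right x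
  open scoped ComplexOrder in
  have h' : (0:ℂ) ≤ ⟪x, S x⟫_ℂ := by simpa using this
  open scoped ComplexOrder in
  exact (Complex.nonneg_iff.mp h').1

lemma diag_le {S S' : H →L[ℂ] H} (h : S ≤ S') (x : H) :
    (⟪x, S x⟫_ℂ).re ≤ (⟪x, S' x⟫_ℂ).re := by
  have h0 : (0 : H →L[ℂ] H) ≤ S' - S := by simpa using sub_nonneg.mpr h
  have := diag_nonneg h0 x
  rw [sub_apply, inner_sub_right] at this
  simp only [Complex.sub_re] at this
  linarith


lemma diag_smul (C : ℝ) (N : H →L[ℂ] H) (x : H) :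
    (⟪x, (C • N) x⟫_ℂ).re = C * (⟪x, N x⟫_ℂ).re := by
  rw [ContinuousLinearMap.smul_apply]
  rw [← algebraMap_smul ℂ C (N x), Complex.coe_algebraMap, inner_smul_right]
  simp

lemma summable_diag_cfc {A : H →L[ℂ] H} (hA : IsSelfAdjoint A)
    (hS : Summable fun i => (⟪b i, cfc (fun x : ℝ => |x| ^ 3) A (b i)⟫_ℂ).re)
    {f : ℝ → ℝ} (hf : ContinuousOn f (spectrum ℝ A)) {C : ℝ}
    (hfb : ∀ x, |f x| ≤ C * |x| ^ 3) :
    Summable fun i => (⟪b i, cfc f A (b i)⟫_ℂ).re := by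
  have hC : cfc (fun x : ℝ => C * |x| ^ 3) A = C • cfc (fun x : ℝ => |x| ^ 3) A := by
    rw [cfc_const_mul (R := ℝ) C (fun x : ℝ => |x| ^ 3) A (by fun_prop)]
  have hle : cfc f A ≤ cfc (fun x : ℝ => C * |x| ^ 3) A :=
    cfc_mono (fun x _ => (abs_le.mp (hfb x)).2)
  have hge : cfc (fun x : ℝ => -(C * |x| ^ 3)) A ≤ cfc f A :=
    cfc_mono (fun x _ => neg_le_of_abs_le (hfb x))
  have hneg : cfc (fun x : ℝ => -(C * |x| ^ 3)) A = -(C • cfc (fun x : ℝ => |x| ^ 3) A) := by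
    rw [cfc_neg, hC]
  refine Summable.of_abs ?_
  refine Summable.of_nonneg_of_le (fun i => abs_nonneg _) (fun i => ?_) (hS.mul_left C)
  rw [abs_le]
  constructor
  · have h1 := diag_le (hneg.symm.trans_le hge) (b i)
    rw [ContinuousLinearMap.neg_apply, inner_neg_right, Complex.neg_re, diag_smul] at h1
    linarith
  · have h2 := diag_le (hle.trans_eq hC) (b i)
    rw [diag_smul] at h2
    linarith


lemma parseval (x : H) : HasSum (fun j => ‖⟪b j, x⟫_ℂ‖ ^ 2) (‖x‖ ^ 2) := by
  have h := b.hasSum_inner_mul_inner x x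
  rw [inner_self_eq_norm_sq_to_K] at h
  have heq : ∀ j, ⟪x, b j⟫_ℂ * ⟪b j, x⟫_ℂ = ((‖⟪b j, x⟫_ℂ‖ ^ 2 : ℝ) : ℂ) := by
    intro j
    rw [← inner_conj_symm]
    rw [Complex.conj_mul']
    norm_cast
  rw [show (fun j => ⟪x, b j⟫_ℂ * ⟪b j, x⟫_ℂ) = fun j => ((‖⟪b j, x⟫_ℂ‖ ^ 2 : ℝ) : ℂ) from funext heq] at h
  have h2 : HasSum (fun j => ((‖⟪b j, x⟫_ℂ‖ ^ 2 : ℝ) : ℂ)) (((‖x‖ ^ 2 : ℝ) : ℂ)) := by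
    rw [Complex.ofReal_pow]; exact h
  exact Complex.hasSum_ofReal.mp h2

lemma hs_matrix {Y : H →L[ℂ] H} (hY : Summable fun i => ‖Y (b i)‖ ^ 2) :
    Summable fun p : ι × ι => ‖⟪b p.2, Y (b p.1)⟫_ℂ‖ ^ 2 := by
  rw [summable_prod_of_nonneg (fun p => by positivity)]
  refine ⟨fun i => (parseval b (Y (b i))).summable, ?_⟩
  have : ∀ i, ∑' j, ‖⟪b j, Y (b i)⟫_ℂ‖ ^ 2 = ‖Y (b i)‖ ^ 2 :=
    fun i => (parseval b (Y (b i))).tsum_eq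
  exact hY.congr (fun i => (this i).symm)

lemma hs_star {Y : H →L[ℂ] H} (hY : Summable fun i => ‖Y (b i)‖ ^ 2) :
    Summable fun i => ‖(star Y) (b i)‖ ^ 2 := by
  have hM := hs_matrix b hY
  have hswap : Summable fun p : ι × ι => ‖⟪b p.2, (star Y) (b p.1)⟫_ℂ‖ ^ 2 := by
    have he : (fun p : ι × ι => ‖⟪b p.2, (star Y) (b p.1)⟫_ℂ‖ ^ 2)
        = (fun p : ι × ι => ‖⟪b p.2, Y (b p.1)⟫_ℂ‖ ^ 2) ∘ (Equiv.prodComm ι ι) := by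
      funext p
      simp only [Function.comp_apply, Equiv.prodComm_apply, Prod.snd_swap, Prod.fst_swap]
      rw [star_eq_adjoint, adjoint_inner_right, norm_inner_symm]
    rw [he, (Equiv.prodComm ι ι).summable_iff]
    exact hM
  have h2 := ((summable_prod_of_nonneg (fun p => by positivity)).mp hswap).2
  have : ∀ i, ∑' j, ‖⟪b j, (star Y) (b i)⟫_ℂ‖ ^ 2 = ‖(star Y) (b i)‖ ^ 2 :=
    fun i => (parseval b ((star Y) (b i))).tsum_eq
  exact h2.congr (fun i => this i)

lemma hs_comp_left (S : H →L[ℂ] H) {Y : H →L[ℂ] H}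
    (hY : Summable fun i => ‖Y (b i)‖ ^ 2) :
    Summable fun i => ‖(S * Y) (b i)‖ ^ 2 := by
  refine Summable.of_nonneg_of_le (fun i => by positivity) (fun i => ?_) (hY.mul_left (‖S‖ ^ 2))
  rw [ContinuousLinearMap.mul_apply]
  calc ‖S (Y (b i))‖ ^ 2 ≤ (‖S‖ * ‖Y (b i)‖) ^ 2 := by
        gcongr; exact S.le_opNorm _
    _ = ‖S‖ ^ 2 * ‖Y (b i)‖ ^ 2 := by ring



lemma diag_mul_hasSum (Y Z : H →L[ℂ] H) (i : ι) :
    HasSum (fun j => ⟪b j, Z (b i)⟫_ℂ * ⟪b i, Y (b j)⟫_ℂ) ⟪b i, (Y * Z) (b i)⟫_ℂ := by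
  have h2 := (b.hasSum_repr (Z (b i))).mapL (((innerSL ℂ) (b i)).comp Y)
  have hfun : (fun j => (((innerSL ℂ) (b i)).comp Y) (b.repr (Z (b i)) j • b j))
      = fun j => ⟪b j, Z (b i)⟫_ℂ * ⟪b i, Y (b j)⟫_ℂ := by
    funext j
    simp only [ContinuousLinearMap.comp_apply, map_smul, b.repr_apply_apply]
    simp [smul_eq_mul]
  rw [hfun] at h2
  have hval : (((innerSL ℂ) (b i)).comp Y) (Z (b i)) = ⟪b i, (Y * Z) (b i)⟫_ℂ := by
    simp [mul_apply]
  rwa [hval] at h2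

lemma cyc (Y Z : H →L[ℂ] H) (hY : Summable fun i => ‖Y (b i)‖ ^ 2)
    (hZ : Summable fun i => ‖Z (b i)‖ ^ 2) :
    traceB b (Y * Z) = traceB b (Z * Y) := by
  set a : ι × ι → ℂ := fun p => ⟪b p.2, Z (b p.1)⟫_ℂ * ⟪b p.1, Y (b p.2)⟫_ℂ with ha
  have hmZ := hs_matrix b hZ
  have hmY : Summable fun p : ι × ι => ‖⟪b p.1, Y (b p.2)⟫_ℂ‖ ^ 2 := by
    have h := hs_matrix b hY
    have he : (fun p : ι × ι => ‖⟪b p.1, Y (b p.2)⟫_ℂ‖ ^ 2)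
        = (fun p : ι × ι => ‖⟪b p.2, Y (b p.1)⟫_ℂ‖ ^ 2) ∘ (Equiv.prodComm ι ι) := by
      funext p; rfl
    rw [he, (Equiv.prodComm ι ι).summable_iff]
    exact h
  have hsum : Summable a := by
    refine Summable.of_norm_bounded (hmZ.add hmY) (fun p => ?_)
    have h1 : ‖a p‖ = ‖⟪b p.2, Z (b p.1)⟫_ℂ‖ * ‖⟪b p.1, Y (b p.2)⟫_ℂ‖ := norm_mul _ _
    rw [h1]
    nlinarith [sq_nonneg (‖⟪b p.2, Z (b p.1)⟫_ℂ‖ - ‖⟪b p.1, Y (b p.2)⟫_ℂ‖),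
      norm_nonneg (⟪b p.2, Z (b p.1)⟫_ℂ), norm_nonneg (⟪b p.1, Y (b p.2)⟫_ℂ)]
  have hYZ : traceB b (Y * Z) = ∑' p, a p := by
    rw [traceB, Summable.tsum_prod hsum]
    exact (tsum_congr fun i => ((diag_mul_hasSum b Y Z i).tsum_eq).symm)
  have hswap : Summable (a ∘ (Equiv.prodComm ι ι)) := (Equiv.prodComm ι ι).summable_iff.mpr hsum
  have hZY : traceB b (Z * Y) = ∑' p, (a ∘ (Equiv.prodComm ι ι)) p := by
    rw [traceB, Summable.tsum_prod hswap]
    refine tsum_congr fun j => ?_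
    have h := diag_mul_hasSum b Z Y j
    rw [← h.tsum_eq]
    exact tsum_congr fun i => by simp [ha, mul_comm]
  rw [hYZ, hZY]
  exact ((Equiv.prodComm ι ι).tsum_eq a).symm

lemma rpow_half_cont : Continuous fun x : ℝ => x ^ ((1:ℝ)/2) := by
  rw [continuous_iff_continuousAt]
  exact fun x => Real.continuousAt_rpow_const x _ (Or.inr (by norm_num))

lemma rpow_3half_cont : Continuous fun x : ℝ => x ^ ((3:ℝ)/2) := by
  rw [continuous_iff_continuousAt]
  exact fun x => Real.continuousAt_rpow_const x _ (Or.inr (by norm_num))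

lemma mul_self_rpow_half (y : ℝ) : (y * y) ^ ((1:ℝ)/2) = |y| := by
  rw [← Real.sqrt_eq_rpow, Real.sqrt_mul_self_eq_abs]

lemma mul_self_rpow_3half (x : ℝ) : (x * x) ^ ((3:ℝ)/2) = |x| ^ 3 := by
  rw [show ((3:ℝ)/2) = (1/(2:ℝ)) * 3 by norm_num, Real.rpow_mul (mul_self_nonneg x),
    ← Real.sqrt_eq_rpow, Real.sqrt_mul_self_eq_abs,
    show (3:ℝ) = ((3:ℕ):ℝ) by norm_num, Real.rpow_natCast]

lemma hs_cfc {A : H →L[ℂ] H} (hA : IsSelfAdjoint A)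
    (hS : Summable fun i => (⟪b i, cfc (fun x : ℝ => |x| ^ 3) A (b i)⟫_ℂ).re)
    {f : ℝ → ℝ} (hf : Continuous f) {C : ℝ} (hfb : ∀ x, f x ^ 2 ≤ C * |x| ^ 3) :
    Summable fun i => ‖(cfc f A) (b i)‖ ^ 2 := by
  have hmul : cfc (fun x => f x * f x) A = cfc f A * cfc f A :=
    cfc_mul f f A hf.continuousOn hf.continuousOn
  have hsa : IsSelfAdjoint (cfc f A) := cfc_predicate f A
  have hnorm : ∀ i, ‖(cfc f A) (b i)‖ ^ 2
      = (⟪b i, (cfc (fun x => f x * f x) A) (b i)⟫_ℂ).re := by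
    intro i
    have hadj : ContinuousLinearMap.adjoint (cfc f A) = cfc f A := by
      rw [← star_eq_adjoint, hsa.star_eq]
    have h1 : ⟪(cfc f A) (b i), (cfc f A) (b i)⟫_ℂ
        = ⟪b i, (cfc f A * cfc f A) (b i)⟫_ℂ := by
      have := ContinuousLinearMap.adjoint_inner_right (cfc f A) (b i) ((cfc f A) (b i))
      rw [hadj] at this
      rw [← this, ContinuousLinearMap.mul_apply]
    have h2 : ⟪(cfc f A) (b i), (cfc f A) (b i)⟫_ℂ
        = ((‖(cfc f A) (b i)‖ ^ 2 : ℝ) : ℂ) := by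
      rw [inner_self_eq_norm_sq_to_K]; norm_cast
    rw [hmul, ← h1, h2, Complex.ofReal_re]
  refine Summable.congr ?_ (fun i => (hnorm i).symm)
  refine summable_diag_cfc b hA hS (hf.mul hf).continuousOn (C := C) (fun x => ?_)
  have := hfb x
  have h0 : 0 ≤ f x ^ 2 := sq_nonneg _
  have habs : |f x * f x| = f x ^ 2 := by
    rw [abs_mul, ← sq_abs]; ring
  rw [habs]
  exact this

end Stmt7Aux

/-- For orthogonal projections `P, Q` with `Q - P ∈ J₃` and
`f_t(A) = (1+t)A³(1+tA²)⁻¹`, `f_t(Q-P)` is trace class and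
`tr f_t(Q-P) = tr (Q-P)³` for all `0 ≤ t < ∞`. -/
theorem stmt7 {H : Type*} [NormedAddCommGroup H] [InnerProductSpace ℂ H] [CompleteSpace H]
    {ι : Type*} (b : HilbertBasis ι ℂ H) (P Q : H →L[ℂ] H)
    (hP : IsSelfAdjoint P) (hP2 : P ^ 2 = P) (hQ : IsSelfAdjoint Q) (hQ2 : Q ^ 2 = Q)
    (h3 : MemSchatten b 3 (Q - P)) (t : ℝ) (ht : 0 ≤ t) :
    MemSchatten b 1
        (((1 + t : ℝ) : ℂ) • ((Q - P) ^ 3 * Ring.inverse (1 + ((t : ℂ)) • (Q - P) ^ 2))) ∧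
    traceB b (((1 + t : ℝ) : ℂ) • ((Q - P) ^ 3 * Ring.inverse (1 + ((t : ℂ)) • (Q - P) ^ 2))) =
      traceB b ((Q - P) ^ 3) := by
  set A := Q - P with hAdef
  have hA : IsSelfAdjoint A := hQ.sub hP
  set B : H →L[ℂ] H := 1 - P - Q with hBdef
  have hBsa : IsSelfAdjoint B := ((IsSelfAdjoint.one (R := H →L[ℂ] H)).sub hP).sub hQ
  have eP : P * P = P := by rw [← sq, hP2]
  have eQ : Q * Q = Q := by rw [← sq, hQ2]
  have hAB : A * B = -(B * A) := by
    simp only [hAdef, hBdef, mul_sub, sub_mul, mul_one, one_mul, eP, eQ]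
    abel
  have hBB : B * B = 1 - A ^ 2 := by
    simp only [hAdef, hBdef, mul_sub, sub_mul, mul_one, one_mul, eP, eQ, sq]
    abel
  have hBA : B * A = -(A * B) := by rw [hAB, neg_neg]
  have hBA2 : B * A ^ 2 = A ^ 2 * B := by
    calc B * A ^ 2 = (B * A) * A := by rw [sq, mul_assoc]
      _ = -((A * B) * A) := by rw [hBA, neg_mul]
      _ = -(A * (B * A)) := by rw [mul_assoc]
      _ = -(A * -(A * B)) := by rw [hBA]
      _ = A * (A * B) := by rw [mul_neg, neg_neg]
      _ = A ^ 2 * B := by rw [← mul_assoc, ← sq]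
  have hA3B : A ^ 3 * B = -(B * A ^ 3) := by
    calc A ^ 3 * B = A * (A ^ 2 * B) := by
          rw [← mul_assoc, ← pow_succ' A 2]
      _ = A * (B * A ^ 2) := by rw [hBA2]
      _ = (A * B) * A ^ 2 := by rw [mul_assoc]
      _ = -((B * A) * A ^ 2) := by rw [hAB, neg_mul]
      _ = -(B * A ^ 3) := by rw [mul_assoc, ← pow_succ' A 2]
  -- t-dependent algebra
  have hwpos : ∀ x : ℝ, 0 < 1 + t * x ^ 2 := fun x => by nlinarith [sq_nonneg x]
  have hwcont : Continuous fun x : ℝ => 1 + t * x ^ 2 := by continuity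
  have hwinvcont : Continuous fun x : ℝ => (1 + t * x ^ 2)⁻¹ :=
    hwcont.inv₀ fun x => (hwpos x).ne'
  have hw : cfc (fun x : ℝ => 1 + t * x ^ 2) A = 1 + (t : ℂ) • A ^ 2 := by
    rw [cfc_const_add (R := ℝ) 1 (fun x : ℝ => t * x ^ 2) A (by fun_prop),
      cfc_const_mul (R := ℝ) t (fun x : ℝ => x ^ 2) A (by fun_prop),
      cfc_pow_id (R := ℝ) A 2, map_one]
    rw [← algebraMap_smul ℂ t (A ^ 2), Complex.coe_algebraMap]
  have h1' : cfc (fun x : ℝ => 1 + t * x ^ 2) A * cfc (fun x : ℝ => (1 + t * x ^ 2)⁻¹) A = 1 := by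
    rw [← cfc_mul _ _ A hwcont.continuousOn hwinvcont.continuousOn]
    have : (fun x : ℝ => (1 + t * x ^ 2) * (1 + t * x ^ 2)⁻¹) = fun _ : ℝ => (1 : ℝ) :=
      funext fun x => mul_inv_cancel₀ (hwpos x).ne'
    rw [this, cfc_const_one ℝ A]
  have h2' : cfc (fun x : ℝ => (1 + t * x ^ 2)⁻¹) A * cfc (fun x : ℝ => 1 + t * x ^ 2) A = 1 := by
    rw [← cfc_mul _ _ A hwinvcont.continuousOn hwcont.continuousOn]
    have : (fun x : ℝ => (1 + t * x ^ 2)⁻¹ * (1 + t * x ^ 2)) = fun _ : ℝ => (1 : ℝ) :=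
      funext fun x => inv_mul_cancel₀ (hwpos x).ne'
    rw [this, cfc_const_one ℝ A]
  rw [hw] at h1' h2'
  have hunit : IsUnit (1 + (t : ℂ) • A ^ 2) :=
    ⟨⟨1 + (t : ℂ) • A ^ 2, cfc (fun x : ℝ => (1 + t * x ^ 2)⁻¹) A, h1', h2'⟩, rfl⟩
  have hRinv : Ring.inverse (1 + (t : ℂ) • A ^ 2) = cfc (fun x : ℝ => (1 + t * x ^ 2)⁻¹) A := by
    calc Ring.inverse (1 + (t : ℂ) • A ^ 2)
        = Ring.inverse (1 + (t : ℂ) • A ^ 2) * ((1 + (t : ℂ) • A ^ 2)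
            * cfc (fun x : ℝ => (1 + t * x ^ 2)⁻¹) A) := by rw [h1', mul_one]
      _ = (Ring.inverse (1 + (t : ℂ) • A ^ 2) * (1 + (t : ℂ) • A ^ 2))
            * cfc (fun x : ℝ => (1 + t * x ^ 2)⁻¹) A := by rw [mul_assoc]
      _ = cfc (fun x : ℝ => (1 + t * x ^ 2)⁻¹) A := by
            rw [Ring.inverse_mul_cancel _ hunit, one_mul]
  -- commutation of B with the resolvent
  have hBw : B * (1 + (t : ℂ) • A ^ 2) = (1 + (t : ℂ) • A ^ 2) * B := by
    rw [mul_add, add_mul, mul_one, one_mul, mul_smul_comm, smul_mul_assoc, hBA2]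
  have hBR : B * cfc (fun x : ℝ => (1 + t * x ^ 2)⁻¹) A
      = cfc (fun x : ℝ => (1 + t * x ^ 2)⁻¹) A * B := by
    set R' := cfc (fun x : ℝ => (1 + t * x ^ 2)⁻¹) A
    calc B * R' = (R' * (1 + (t : ℂ) • A ^ 2)) * (B * R') := by rw [h2', one_mul]
      _ = R' * (((1 + (t : ℂ) • A ^ 2) * B) * R') := by rw [mul_assoc, mul_assoc]
      _ = R' * ((B * (1 + (t : ℂ) • A ^ 2)) * R') := by rw [hBw]
      _ = (R' * B) * ((1 + (t : ℂ) • A ^ 2) * R') := by rw [mul_assoc, mul_assoc]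
      _ = R' * B := by rw [h1', mul_one]
  -- psi
  have hpsi : cfc (fun x : ℝ => (t * x ^ 3) * (1 + t * x ^ 2)⁻¹) A
      = t • (A ^ 3 * cfc (fun x : ℝ => (1 + t * x ^ 2)⁻¹) A) := by
    rw [cfc_mul _ _ A (by fun_prop) hwinvcont.continuousOn,
      cfc_const_mul (R := ℝ) t (fun x : ℝ => x ^ 3) A (by fun_prop),
      cfc_pow_id (R := ℝ) A 3, smul_mul_assoc]
  have hpsiB : cfc (fun x : ℝ => (t * x ^ 3) * (1 + t * x ^ 2)⁻¹) A * B
      = -(B * cfc (fun x : ℝ => (t * x ^ 3) * (1 + t * x ^ 2)⁻¹) A) := by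
    rw [hpsi]
    set R' := cfc (fun x : ℝ => (1 + t * x ^ 2)⁻¹) A
    calc (t • (A ^ 3 * R')) * B = t • (A ^ 3 * (R' * B)) := by
          rw [smul_mul_assoc, mul_assoc]
      _ = t • (A ^ 3 * (B * R')) := by rw [hBR]
      _ = t • ((A ^ 3 * B) * R') := by rw [mul_assoc]
      _ = t • (-(B * A ^ 3) * R') := by rw [hA3B]
      _ = -(t • (B * (A ^ 3 * R'))) := by rw [neg_mul, smul_neg, mul_assoc]
      _ = -(B * (t • (A ^ 3 * R'))) := by rw [mul_smul_comm]
  -- transfer h3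
  have hS : Summable fun i => (⟪b i, (cfc (fun x : ℝ => |x| ^ 3) A) (b i)⟫_ℂ).re := by
    have e1 : adjoint A * A = A * A := by rw [hA.adjoint_eq]
    have e2 : cfc (fun x : ℝ => x * x) A = A * A := by
      rw [cfc_mul (fun x : ℝ => x) (fun x : ℝ => x) A continuous_id.continuousOn
        continuous_id.continuousOn, cfc_id' ℝ A]
    have e3 : cfc (fun x : ℝ => x ^ ((3:ℝ)/2)) (adjoint A * A)
        = cfc (fun x : ℝ => |x| ^ 3) A := by
      rw [e1, ← e2, ← cfc_comp' (fun x : ℝ => x ^ ((3:ℝ)/2)) (fun x : ℝ => x * x) A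
        rpow_3half_cont.continuousOn (continuous_id.mul continuous_id).continuousOn]
      have : (fun x : ℝ => (x * x) ^ ((3:ℝ)/2)) = fun x : ℝ => |x| ^ 3 :=
        funext mul_self_rpow_3half
      rw [this]
    unfold MemSchatten at h3
    rw [show ((3:ℝ) / 2) = (3:ℝ)/2 from rfl] at h3
    rw [e3] at h3
    exact h3
  -- representation of the goal operator
  have hgop : (((1 + t : ℝ) : ℂ) • (A ^ 3 * Ring.inverse (1 + (t : ℂ) • A ^ 2)))
      = cfc (fun x : ℝ => (1 + t) * (x ^ 3 * (1 + t * x ^ 2)⁻¹)) A := by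
    rw [hRinv,
      cfc_const_mul (R := ℝ) (1 + t) (fun x : ℝ => x ^ 3 * (1 + t * x ^ 2)⁻¹) A
        ((continuous_pow 3).continuousOn.mul hwinvcont.continuousOn),
      cfc_mul _ _ A (continuous_pow 3).continuousOn hwinvcont.continuousOn,
      cfc_pow_id (R := ℝ) A 3,
      ← algebraMap_smul ℂ (1 + t) (A ^ 3 * cfc (fun x : ℝ => (1 + t * x ^ 2)⁻¹) A),
      Complex.coe_algebraMap]
  have hgcont : Continuous fun x : ℝ => (1 + t) * (x ^ 3 * (1 + t * x ^ 2)⁻¹) :=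
    continuous_const.mul ((continuous_pow 3).mul hwinvcont)
  have hgb : ∀ x : ℝ, |(1 + t) * (x ^ 3 * (1 + t * x ^ 2)⁻¹)| ≤ (1 + t) * |x| ^ 3 := by
    intro x
    have hc0 : 0 < (1 + t * x ^ 2)⁻¹ := inv_pos.mpr (hwpos x)
    have hc1 : (1 + t * x ^ 2)⁻¹ ≤ 1 := by
      rw [inv_le_one_iff₀]
      right
      nlinarith [sq_nonneg x]
    rw [abs_mul, abs_mul, abs_pow, abs_of_nonneg (by linarith : (0:ℝ) ≤ 1 + t),
      abs_of_pos hc0]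
    have h3 : (0:ℝ) ≤ |x| ^ 3 := by positivity
    have h4 : |x| ^ 3 * (1 + t * x ^ 2)⁻¹ ≤ |x| ^ 3 := mul_le_of_le_one_right h3 hc1
    nlinarith
  constructor
  · unfold MemSchatten
    rw [hgop]
    have hXsa : IsSelfAdjoint (cfc (fun x : ℝ => (1 + t) * (x ^ 3 * (1 + t * x ^ 2)⁻¹)) A) :=
      cfc_predicate _ A
    have hXX : adjoint (cfc (fun x : ℝ => (1 + t) * (x ^ 3 * (1 + t * x ^ 2)⁻¹)) A)
          * cfc (fun x : ℝ => (1 + t) * (x ^ 3 * (1 + t * x ^ 2)⁻¹)) A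
        = cfc (fun x : ℝ => ((1 + t) * (x ^ 3 * (1 + t * x ^ 2)⁻¹))
            * ((1 + t) * (x ^ 3 * (1 + t * x ^ 2)⁻¹))) A := by
      rw [hXsa.adjoint_eq, ← cfc_mul _ _ A hgcont.continuousOn hgcont.continuousOn]
    rw [hXX, ← cfc_comp' (fun x : ℝ => x ^ ((1:ℝ)/2))
        (fun x : ℝ => ((1 + t) * (x ^ 3 * (1 + t * x ^ 2)⁻¹))
            * ((1 + t) * (x ^ 3 * (1 + t * x ^ 2)⁻¹))) A
        rpow_half_cont.continuousOn (hgcont.mul hgcont).continuousOn]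
    have habs : (fun x : ℝ => (((1 + t) * (x ^ 3 * (1 + t * x ^ 2)⁻¹))
            * ((1 + t) * (x ^ 3 * (1 + t * x ^ 2)⁻¹))) ^ ((1:ℝ)/2))
        = fun x : ℝ => |(1 + t) * (x ^ 3 * (1 + t * x ^ 2)⁻¹)| :=
      funext fun x => mul_self_rpow_half _
    rw [habs]
    refine summable_diag_cfc b hA hS hgcont.abs.continuousOn (C := 1 + t) fun x => ?_
    rw [abs_abs]
    exact hgb x
  · rw [hgop]
    have hA3 : A ^ 3 = cfc (fun x : ℝ => x ^ 3) A := (cfc_pow_id (R := ℝ) A 3).symm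
    have mk : ∀ f : ℝ → ℝ, ContinuousOn f (spectrum ℝ A) → ∀ C : ℝ,
        (∀ x, |f x| ≤ C * |x| ^ 3) →
        Summable fun i => ⟪b i, (cfc f A) (b i)⟫_ℂ := by
      intro f hf C hb
      have hr := summable_diag_cfc b hA hS hf hb
      refine (Complex.summable_ofReal.mpr hr).congr fun i => ?_
      exact (diag_real (cfc_predicate f A) (b i)).symm
    have hdg := mk _ hgcont.continuousOn (1 + t) hgb
    have hd3 : Summable fun i => ⟪b i, (A ^ 3) (b i)⟫_ℂ := by
      rw [hA3]
      exact mk _ (continuous_pow 3).continuousOn 1 fun x => by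
        rw [abs_pow, one_mul]
    have hsub : traceB b (cfc (fun x : ℝ => (1 + t) * (x ^ 3 * (1 + t * x ^ 2)⁻¹)) A)
          - traceB b (A ^ 3)
        = traceB b (cfc (fun x : ℝ => (1 + t) * (x ^ 3 * (1 + t * x ^ 2)⁻¹)) A - A ^ 3) := by
      rw [traceB, traceB, traceB, ← Summable.tsum_sub hdg hd3]
      exact tsum_congr fun i => by
        rw [ContinuousLinearMap.sub_apply, inner_sub_right]
    have hdiff : cfc (fun x : ℝ => (1 + t) * (x ^ 3 * (1 + t * x ^ 2)⁻¹)) A - A ^ 3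
        = cfc (fun x : ℝ => (1 + t) * (x ^ 3 * (1 + t * x ^ 2)⁻¹) - x ^ 3) A := by
      rw [hA3, ← cfc_sub _ _ A hgcont.continuousOn (continuous_pow 3).continuousOn]
    have hpsicont : Continuous fun x : ℝ => (t * x ^ 3) * (1 + t * x ^ 2)⁻¹ :=
      (continuous_const.mul (continuous_pow 3)).mul hwinvcont
    have hfact : (fun x : ℝ => (1 + t) * (x ^ 3 * (1 + t * x ^ 2)⁻¹) - x ^ 3)
        = fun x : ℝ => ((t * x ^ 3) * (1 + t * x ^ 2)⁻¹) * (1 - x ^ 2) := by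
      funext x
      have hne : (1 + t * x ^ 2) ≠ 0 := (hwpos x).ne'
      field_simp
      ring
    have hone_sub : cfc (fun x : ℝ => 1 - x ^ 2) A = 1 - A ^ 2 := by
      rw [cfc_sub (fun _ : ℝ => 1) (fun x : ℝ => x ^ 2) A continuous_const.continuousOn
        (continuous_pow 2).continuousOn, cfc_const_one ℝ A, cfc_pow_id (R := ℝ) A 2]
    have hsplit : cfc (fun x : ℝ => (1 + t) * (x ^ 3 * (1 + t * x ^ 2)⁻¹) - x ^ 3) A
        = cfc (fun x : ℝ => (t * x ^ 3) * (1 + t * x ^ 2)⁻¹) A * (1 - A ^ 2) := by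
      rw [hfact, cfc_mul (fun x : ℝ => (t * x ^ 3) * (1 + t * x ^ 2)⁻¹) (fun x : ℝ => 1 - x ^ 2) A hpsicont.continuousOn
        (continuous_const.sub (continuous_pow 2)).continuousOn, hone_sub]
    have hufcont : Continuous fun x : ℝ => x * Real.sqrt |x| :=
      continuous_id.mul (Real.continuous_sqrt.comp continuous_abs)
    have hvfcont : Continuous fun x : ℝ => (t * (|x| * Real.sqrt |x|)) * (1 + t * x ^ 2)⁻¹ :=
      (continuous_const.mul (continuous_abs.mul
        (Real.continuous_sqrt.comp continuous_abs))).mul hwinvcont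
    have hUV : cfc (fun x : ℝ => x * Real.sqrt |x|) A
          * cfc (fun x : ℝ => (t * (|x| * Real.sqrt |x|)) * (1 + t * x ^ 2)⁻¹) A
        = cfc (fun x : ℝ => (t * x ^ 3) * (1 + t * x ^ 2)⁻¹) A := by
      rw [← cfc_mul _ _ A hufcont.continuousOn hvfcont.continuousOn]
      congr 1
      funext x
      have hs := Real.mul_self_sqrt (abs_nonneg x)
      have h2 := abs_mul_abs_self x
      linear_combination ((1 + t * x ^ 2)⁻¹ * t * x * |x|) * hs
        + ((1 + t * x ^ 2)⁻¹ * t * x) * h2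
    have hU : Summable fun i => ‖(cfc (fun x : ℝ => x * Real.sqrt |x|) A) (b i)‖ ^ 2 := by
      refine hs_cfc b hA hS hufcont (C := 1) fun x => ?_
      have hs := Real.mul_self_sqrt (abs_nonneg x)
      have h2 := abs_mul_abs_self x
      have : (x * Real.sqrt |x|) ^ 2 = 1 * |x| ^ 3 := by
        linear_combination (x ^ 2) * hs - |x| * h2
      exact this.le
    have hV : Summable fun i =>
        ‖(cfc (fun x : ℝ => (t * (|x| * Real.sqrt |x|)) * (1 + t * x ^ 2)⁻¹) A) (b i)‖ ^ 2 := by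
      refine hs_cfc b hA hS hvfcont (C := t ^ 2) fun x => ?_
      have hs := Real.mul_self_sqrt (abs_nonneg x)
      have hc0 : 0 < (1 + t * x ^ 2)⁻¹ := inv_pos.mpr (hwpos x)
      have hc1 : (1 + t * x ^ 2)⁻¹ ≤ 1 := by
        rw [inv_le_one_iff₀]; right; nlinarith [sq_nonneg x]
      have he : ((t * (|x| * Real.sqrt |x|)) * (1 + t * x ^ 2)⁻¹) ^ 2
          = (t ^ 2 * |x| ^ 3) * ((1 + t * x ^ 2)⁻¹) ^ 2 := by
        linear_combination (t ^ 2 * |x| ^ 2 * ((1 + t * x ^ 2)⁻¹) ^ 2) * hs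
      rw [he]
      have h3 : (0:ℝ) ≤ t ^ 2 * |x| ^ 3 := by positivity
      have h4 : ((1 + t * x ^ 2)⁻¹) ^ 2 ≤ 1 := by nlinarith
      have h5 := mul_le_of_le_one_right h3 h4
      linarith
    have hVsa : IsSelfAdjoint
        (cfc (fun x : ℝ => (t * (|x| * Real.sqrt |x|)) * (1 + t * x ^ 2)⁻¹) A) :=
      cfc_predicate _ A
    have hBBsa : IsSelfAdjoint (1 - A ^ 2 : H →L[ℂ] H) := by
      rw [← hBB]
      exact isSelfAdjoint_iff.mpr (by rw [star_mul, hBsa.star_eq])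
    have hVBB : Summable fun i =>
        ‖((cfc (fun x : ℝ => (t * (|x| * Real.sqrt |x|)) * (1 + t * x ^ 2)⁻¹) A)
          * (1 - A ^ 2) : H →L[ℂ] H) (b i)‖ ^ 2 := by
      have h1 := hs_comp_left b (1 - A ^ 2) hV
      have h2 := hs_star b h1
      rwa [star_mul, hVsa.star_eq, hBBsa.star_eq] at h2
    have hBU := hs_comp_left b B hU
    have hVB : Summable fun i =>
        ‖((cfc (fun x : ℝ => (t * (|x| * Real.sqrt |x|)) * (1 + t * x ^ 2)⁻¹) A) * B
          : H →L[ℂ] H) (b i)‖ ^ 2 := by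
      have h2 := hs_star b (hs_comp_left b B hV)
      rwa [star_mul, hVsa.star_eq, hBsa.star_eq] at h2
    have htneg : ∀ X : H →L[ℂ] H, traceB b (-X) = -traceB b X := by
      intro X
      rw [traceB, traceB, ← tsum_neg]
      exact tsum_congr fun i => by rw [ContinuousLinearMap.neg_apply, inner_neg_right]
    have e1 : cfc (fun x : ℝ => (1 + t) * (x ^ 3 * (1 + t * x ^ 2)⁻¹) - x ^ 3) A
        = (cfc (fun x : ℝ => x * Real.sqrt |x|) A)
          * ((cfc (fun x : ℝ => (t * (|x| * Real.sqrt |x|)) * (1 + t * x ^ 2)⁻¹) A)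
            * (1 - A ^ 2)) := by
      rw [hsplit, ← hUV, mul_assoc]
    have e2 : cfc (fun x : ℝ => (1 + t) * (x ^ 3 * (1 + t * x ^ 2)⁻¹) - x ^ 3) A
        = -((B * cfc (fun x : ℝ => x * Real.sqrt |x|) A)
          * ((cfc (fun x : ℝ => (t * (|x| * Real.sqrt |x|)) * (1 + t * x ^ 2)⁻¹) A) * B)) := by
      rw [hsplit, ← hBB]
      calc cfc (fun x : ℝ => (t * x ^ 3) * (1 + t * x ^ 2)⁻¹) A * (B * B)
          = (cfc (fun x : ℝ => (t * x ^ 3) * (1 + t * x ^ 2)⁻¹) A * B) * B := by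
            rw [mul_assoc]
        _ = -(B * cfc (fun x : ℝ => (t * x ^ 3) * (1 + t * x ^ 2)⁻¹) A) * B := by
            rw [hpsiB]
        _ = -((B * cfc (fun x : ℝ => (t * x ^ 3) * (1 + t * x ^ 2)⁻¹) A) * B) := by
            rw [neg_mul]
        _ = -((B * (cfc (fun x : ℝ => x * Real.sqrt |x|) A
              * cfc (fun x : ℝ => (t * (|x| * Real.sqrt |x|)) * (1 + t * x ^ 2)⁻¹) A)) * B) := by
            rw [hUV]
        _ = -((B * cfc (fun x : ℝ => x * Real.sqrt |x|) A)
              * ((cfc (fun x : ℝ => (t * (|x| * Real.sqrt |x|)) * (1 + t * x ^ 2)⁻¹) A) * B)) := by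
            rw [← mul_assoc, ← mul_assoc, mul_assoc (B * cfc (fun x : ℝ => x * Real.sqrt |x|) A)]
    have tr1 : traceB b (cfc (fun x : ℝ => (1 + t) * (x ^ 3 * (1 + t * x ^ 2)⁻¹) - x ^ 3) A)
        = traceB b (((cfc (fun x : ℝ => (t * (|x| * Real.sqrt |x|)) * (1 + t * x ^ 2)⁻¹) A)
            * (1 - A ^ 2)) * (cfc (fun x : ℝ => x * Real.sqrt |x|) A)) := by
      rw [e1]
      exact cyc b _ _ hU hVBB
    have tr2 : traceB b (cfc (fun x : ℝ => (1 + t) * (x ^ 3 * (1 + t * x ^ 2)⁻¹) - x ^ 3) A)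
        = -traceB b (((cfc (fun x : ℝ => (t * (|x| * Real.sqrt |x|)) * (1 + t * x ^ 2)⁻¹) A)
            * (1 - A ^ 2)) * (cfc (fun x : ℝ => x * Real.sqrt |x|) A)) := by
      rw [e2, htneg]
      congr 1
      rw [cyc b _ _ hBU hVB]
      congr 1
      rw [mul_assoc, ← mul_assoc B B, hBB, ← mul_assoc]
    have hzero : traceB b (cfc (fun x : ℝ => (1 + t) * (x ^ 3 * (1 + t * x ^ 2)⁻¹) - x ^ 3) A)
        = 0 := by
      have h := tr1.symm.trans tr2
      rw [tr1]
      linear_combination (1/2 : ℂ) * h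
    have hfin := hsub.trans ((congrArg (traceB b) hdiff).trans hzero)
    exact sub_eq_zero.mp hfin
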